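/- For every p with 0.3334 < p ≤ 1 there exist x, y, z > 0 such that √2·p·x·y·z > N(p,x,y,z), where N(p,x,y,z) = p/2 + ((1−p)/4)x² + ((1−p)/4)x²y² + ((1−p)/4)x²z² + ((1+p)/4)x²y²z². Consequently, for such p the locally filtered state of ρ(p) = p |GHZ⟩⟨GHZ| + ((1−p)/4)|0⟩⟨0|⊗I₄, |GHZ⟩ = (1/√2)(|000⟩+|111⟩), obtained with filters F_A = diag(x,1), F_B = diag(y,1), F_C = diag(z,1), has correlation-matrix maximal singular value √2 p x y z / N > 1, i.e. the Svetlichny bound 4 is exceeded; in particular, for 0.3334 < p ≤ 1/√2 the state ρ(p) itself does not violate the Svetlichny inequality but its filtered state does (hidden genuine nonlocality). -/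

import Mathlib

set_option maxHeartbeats 2000000

open Matrix Polynomial
open scoped Kronecker ComplexOrder

/-- The Pauli matrices σ₁, σ₂, σ₃ (indexed by `Fin 3`). -/
noncomputable def pauli : Fin 3 → Matrix (Fin 2) (Fin 2) ℂ :=
  ![!![0, 1; 1, 0], !![0, -Complex.I; Complex.I, 0], !![1, 0; 0, -1]]

/-- The correlation matrix of a three-qubit state: `M_{j,(i,k)} = tr[ρ(σ_i⊗σ_j⊗σ_k)]`. -/
noncomputable def corrMat (ρ : Matrix (Fin 2 × Fin 2 × Fin 2) (Fin 2 × Fin 2 × Fin 2) ℂ) :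
    Matrix (Fin 3) (Fin 3 × Fin 3) ℝ :=
  fun j ik => ((ρ * (pauli ik.1 ⊗ₖ (pauli j ⊗ₖ pauli ik.2))).trace).re

/-- The observable `G = g₁σ₁ + g₂σ₂ + g₃σ₃` associated to a real vector `g ∈ ℝ³`. -/
noncomputable def obs (g : Fin 3 → ℝ) : Matrix (Fin 2) (Fin 2) ℂ :=
  ∑ i : Fin 3, ((g i : ℝ) : ℂ) • pauli i

/-- The Svetlichny operator built from the unit vectors `a, a', b, b', c, c' ∈ ℝ³`. -/
noncomputable def svetlichny (a a' b b' c c' : Fin 3 → ℝ) :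
    Matrix (Fin 2 × Fin 2 × Fin 2) (Fin 2 × Fin 2 × Fin 2) ℂ :=
  obs a ⊗ₖ ((obs b + obs b') ⊗ₖ obs c + (obs b - obs b') ⊗ₖ obs c')
    + obs a' ⊗ₖ ((obs b - obs b') ⊗ₖ obs c - (obs b + obs b') ⊗ₖ obs c')

/-- The vector `|GHZ⟩ = (|000⟩ + |111⟩)/√2`. -/
noncomputable def ghz : Fin 2 × Fin 2 × Fin 2 → ℂ :=
  fun x => if x = (0, 0, 0) ∨ x = (1, 1, 1) then (((Real.sqrt 2)⁻¹ : ℝ) : ℂ) else 0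

/-- The rank-one projector `|0⟩⟨0|`. -/
noncomputable def E00 : Matrix (Fin 2) (Fin 2) ℂ := !![1, 0; 0, 0]

/-- The state `ρ(p) = p|GHZ⟩⟨GHZ| + ((1-p)/4)|0⟩⟨0| ⊗ I₄`. -/
noncomputable def rhoGHZ (p : ℝ) :
    Matrix (Fin 2 × Fin 2 × Fin 2) (Fin 2 × Fin 2 × Fin 2) ℂ :=
  (p : ℂ) • Matrix.vecMulVec ghz (star ghz)
    + (((1 - p) / 4 : ℝ) : ℂ) • (E00 ⊗ₖ (1 : Matrix (Fin 2 × Fin 2) (Fin 2 × Fin 2) ℂ))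

/-- The normalization factor `N(p,x,y,z)` of the filtered state of `ρ(p)`. -/
noncomputable def Nghz (p x y z : ℝ) : ℝ :=
  p / 2 + (1 - p) / 4 * x ^ 2 + (1 - p) / 4 * (x ^ 2 * y ^ 2)
    + (1 - p) / 4 * (x ^ 2 * z ^ 2) + (1 + p) / 4 * (x ^ 2 * y ^ 2 * z ^ 2)

/-- The filtered state of `ρ(p)` with filters `diag(x,1), diag(y,1), diag(z,1)`. -/
noncomputable def rhoGHZFiltered (p x y z : ℝ) :
    Matrix (Fin 2 × Fin 2 × Fin 2) (Fin 2 × Fin 2 × Fin 2) ℂ :=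
  ((Nghz p x y z : ℝ) : ℂ)⁻¹ •
    ((Matrix.diagonal ![(x : ℂ), 1] ⊗ₖ (Matrix.diagonal ![(y : ℂ), 1] ⊗ₖ
        Matrix.diagonal ![(z : ℂ), 1]))
      * rhoGHZ p *
      (Matrix.diagonal ![(x : ℂ), 1] ⊗ₖ (Matrix.diagonal ![(y : ℂ), 1] ⊗ₖ
        Matrix.diagonal ![(z : ℂ), 1]))ᴴ)

/-! ### Auxiliary lemmas -/

lemma le_of_sq_le' (s t : ℝ) (ht : 0 ≤ t) (h : s^2 ≤ t^2) : s ≤ t := by nlinarith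

lemma csA (x y v w : ℝ) : (x*v - y*w)^2 ≤ (x^2+y^2)*(v^2+w^2) := by
  nlinarith [sq_nonneg (x*w+y*v)]

lemma CS2 (D1 D2 X1 Y1 X2 Y2 : ℝ) (hX1 : 0 ≤ X1) (hY1 : 0 ≤ Y1) (hX2 : 0 ≤ X2) (hY2 : 0 ≤ Y2)
    (h1 : D1^2 ≤ X1*Y1) (h2 : D2^2 ≤ X2*Y2) : (D1+D2)^2 ≤ (X1+X2)*(Y1+Y2) := by
  have hsq : (2*(D1*D2))^2 ≤ (X1*Y2+X2*Y1)^2 := by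
    nlinarith [sq_nonneg (X1*Y2 - X2*Y1), mul_le_mul h1 h2 (sq_nonneg D2) (mul_nonneg hX1 hY1)]
  have h3 : 2*(D1*D2) ≤ X1*Y2+X2*Y1 :=
    le_of_sq_le' _ _ (by positivity) hsq
  nlinarith

lemma Pbound (a0 a1 A0 A1 b0 b1 B0 B1 c0 c1 C0 C1 : ℝ)
    (ha : a0^2+a1^2 ≤ 1) (hA : A0^2+A1^2 ≤ 1) (hb : b0^2+b1^2 ≤ 1) (hB : B0^2+B1^2 ≤ 1)
    (hc : c0^2+c1^2 ≤ 1) (hC : C0^2+C1^2 ≤ 1) :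
    (((b0+B0)*(a0*c0 - a1*c1 - A0*C0 + A1*C1) - (b1+B1)*(a0*c1 + a1*c0 - A0*C1 - A1*C0))
     + ((b0-B0)*(a0*C0 - a1*C1 + A0*c0 - A1*c1) - (b1-B1)*(a0*C1 + a1*C0 + A0*c1 + A1*c0)))^2
      ≤ 32 := by
  have hU : (((b0+B0)^2+(b1+B1)^2) + ((b0-B0)^2+(b1-B1)^2)) ≤ 4 := by nlinarith
  have h2s : |2*(a1*A0 - a0*A1)| ≤ (a0^2+a1^2) + (A0^2+A1^2) := by
    apply le_of_sq_le' _ _ (by positivity)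
    rw [sq_abs]
    nlinarith [sq_nonneg ((a0^2+a1^2) - (A0^2+A1^2)), sq_nonneg (a0*A0 + a1*A1)]
  have h2t : |2*(c1*C0 - c0*C1)| ≤ (c0^2+c1^2) + (C0^2+C1^2) := by
    apply le_of_sq_le' _ _ (by positivity)
    rw [sq_abs]
    nlinarith [sq_nonneg ((c0^2+c1^2) - (C0^2+C1^2)), sq_nonneg (c0*C0 + c1*C1)]
  have hst : 4*(a1*A0 - a0*A1)*(c1*C0 - c0*C1)
      ≤ ((a0^2+a1^2) + (A0^2+A1^2)) * ((c0^2+c1^2) + (C0^2+C1^2)) := by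
    calc 4*(a1*A0 - a0*A1)*(c1*C0 - c0*C1)
        ≤ |2*(a1*A0 - a0*A1)| * |2*(c1*C0 - c0*C1)| := by
          rw [← abs_mul]
          have h := le_abs_self ((2*(a1*A0 - a0*A1))*(2*(c1*C0 - c0*C1)))
          linarith [h, (by ring : (2*(a1*A0 - a0*A1))*(2*(c1*C0 - c0*C1))
            = 4*(a1*A0 - a0*A1)*(c1*C0 - c0*C1))]
      _ ≤ ((a0^2+a1^2) + (A0^2+A1^2)) * ((c0^2+c1^2) + (C0^2+C1^2)) :=
          mul_le_mul h2s h2t (abs_nonneg _) (by positivity)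
  have hmul : ((a0^2+a1^2) + (A0^2+A1^2)) * ((c0^2+c1^2) + (C0^2+C1^2)) ≤ 4 := by
    nlinarith
  have hW : (((a0*c0 - a1*c1 - A0*C0 + A1*C1)^2 + (a0*c1 + a1*c0 - A0*C1 - A1*C0)^2)
      + ((a0*C0 - a1*C1 + A0*c0 - A1*c1)^2 + (a0*C1 + a1*C0 + A0*c1 + A1*c0)^2)) ≤ 8 := by
    have hid : ((a0*c0 - a1*c1 - A0*C0 + A1*C1)^2 + (a0*c1 + a1*c0 - A0*C1 - A1*C0)^2)
      + ((a0*C0 - a1*C1 + A0*c0 - A1*c1)^2 + (a0*C1 + a1*C0 + A0*c1 + A1*c0)^2)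
        = ((a0^2+a1^2) + (A0^2+A1^2)) * ((c0^2+c1^2) + (C0^2+C1^2))
          + 4*(a1*A0 - a0*A1)*(c1*C0 - c0*C1) := by ring
    rw [hid]
    linarith [hst, hmul]
  have hD1 := csA (b0+B0) (b1+B1) (a0*c0 - a1*c1 - A0*C0 + A1*C1) (a0*c1 + a1*c0 - A0*C1 - A1*C0)
  have hD2 := csA (b0-B0) (b1-B1) (a0*C0 - a1*C1 + A0*c0 - A1*c1) (a0*C1 + a1*C0 + A0*c1 + A1*c0)
  have hcs := CS2 _ _ _ _ _ _
    (by positivity : (0:ℝ) ≤ (b0+B0)^2+(b1+B1)^2)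
    (by positivity : (0:ℝ) ≤ (a0*c0 - a1*c1 - A0*C0 + A1*C1)^2 + (a0*c1 + a1*c0 - A0*C1 - A1*C0)^2)
    (by positivity : (0:ℝ) ≤ (b0-B0)^2+(b1-B1)^2)
    (by positivity : (0:ℝ) ≤ (a0*C0 - a1*C1 + A0*c0 - A1*c1)^2 + (a0*C1 + a1*C0 + A0*c1 + A1*c0)^2)
    hD1 hD2
  calc (((b0+B0)*(a0*c0 - a1*c1 - A0*C0 + A1*C1) - (b1+B1)*(a0*c1 + a1*c0 - A0*C1 - A1*C0))
     + ((b0-B0)*(a0*C0 - a1*C1 + A0*c0 - A1*c1) - (b1-B1)*(a0*C1 + a1*C0 + A0*c1 + A1*c0)))^2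
      ≤ (((b0+B0)^2+(b1+B1)^2) + ((b0-B0)^2+(b1-B1)^2))
        * (((a0*c0 - a1*c1 - A0*C0 + A1*C1)^2 + (a0*c1 + a1*c0 - A0*C1 - A1*C0)^2)
          + ((a0*C0 - a1*C1 + A0*c0 - A1*c1)^2 + (a0*C1 + a1*C0 + A0*c1 + A1*c0)^2)) := hcs
    _ ≤ 4 * 8 := mul_le_mul hU hW (by positivity) (by norm_num)
    _ = 32 := by norm_num

lemma obs_apply (g : Fin 3 → ℝ) :
    obs g = !![((g 2 : ℝ) : ℂ), (g 0 : ℝ) - (g 1 : ℝ) * Complex.I;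
               (g 0 : ℝ) + (g 1 : ℝ) * Complex.I, -((g 2 : ℝ) : ℂ)] := by
  ext i j
  fin_cases i <;> fin_cases j <;>
    simp [obs, pauli, Fin.sum_univ_three] <;> ring

lemma kron_sub (A : Matrix (Fin 2) (Fin 2) ℂ)
    (M N : Matrix (Fin 2 × Fin 2) (Fin 2 × Fin 2) ℂ) :
    A ⊗ₖ (M - N) = A ⊗ₖ M - A ⊗ₖ N := by
  ext i j
  simp [Matrix.kroneckerMap_apply, mul_sub]

lemma trace_kron_rho (p : ℝ) (A B C : Matrix (Fin 2) (Fin 2) ℂ) :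
    ((A ⊗ₖ (B ⊗ₖ C)) * rhoGHZ p).trace =
      ((p/2 + (1-p)/4 : ℝ) : ℂ) * (A 0 0 * B 0 0 * C 0 0)
      + (((1-p)/4 : ℝ) : ℂ) * (A 0 0 * B 0 0 * C 1 1)
      + (((1-p)/4 : ℝ) : ℂ) * (A 0 0 * B 1 1 * C 0 0)
      + (((1-p)/4 : ℝ) : ℂ) * (A 0 0 * B 1 1 * C 1 1)
      + ((p/2 : ℝ) : ℂ) * (A 1 1 * B 1 1 * C 1 1)
      + ((p/2 : ℝ) : ℂ) * (A 0 1 * B 0 1 * C 0 1 + A 1 0 * B 1 0 * C 1 0) := by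
  have hs2 : (((Real.sqrt 2 : ℝ) : ℂ))⁻¹^2 = 1/2 := by
    rw [← Complex.ofReal_inv, ← Complex.ofReal_pow]
    norm_num [Real.sq_sqrt]
  simp only [Matrix.trace, Matrix.diag, Matrix.mul_apply, rhoGHZ, Matrix.add_apply,
    Matrix.smul_apply, Matrix.vecMulVec_apply, Pi.star_apply, ghz, E00,
    Matrix.kroneckerMap_apply, Fintype.sum_prod_type, Fin.sum_univ_two]
  norm_num [Fin.ext_iff, Prod.ext_iff]
  linear_combination (↑p * (A 0 0*B 0 0*C 0 0 + A 0 1*B 0 1*C 0 1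
    + A 1 0*B 1 0*C 1 0 + A 1 1*B 1 1*C 1 1)) * hs2

lemma trace_kron_rhoF (p x y z : ℝ) (A B C : Matrix (Fin 2) (Fin 2) ℂ) :
    ((A ⊗ₖ (B ⊗ₖ C)) * rhoGHZFiltered p x y z).trace =
      (((Nghz p x y z)⁻¹ : ℝ) : ℂ) *
      ( (((1+p)/4 * (x^2*y^2*z^2) : ℝ) : ℂ) * (A 0 0 * B 0 0 * C 0 0)
      + (((1-p)/4 * (x^2*y^2) : ℝ) : ℂ) * (A 0 0 * B 0 0 * C 1 1)
      + (((1-p)/4 * (x^2*z^2) : ℝ) : ℂ) * (A 0 0 * B 1 1 * C 0 0)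
      + (((1-p)/4 * x^2 : ℝ) : ℂ) * (A 0 0 * B 1 1 * C 1 1)
      + ((p/2 : ℝ) : ℂ) * (A 1 1 * B 1 1 * C 1 1)
      + ((p/2 * (x*y*z) : ℝ) : ℂ) * (A 0 1 * B 0 1 * C 0 1 + A 1 0 * B 1 0 * C 1 0) ) := by
  have hs2 : (((Real.sqrt 2 : ℝ) : ℂ))⁻¹^2 = 1/2 := by
    rw [← Complex.ofReal_inv, ← Complex.ofReal_pow]
    norm_num [Real.sq_sqrt]
  simp only [rhoGHZFiltered, Matrix.diagonal_kronecker_diagonal, Matrix.diagonal_conjTranspose,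
    Matrix.mul_smul, Matrix.trace_smul, smul_eq_mul, Matrix.diagonal_mul, Matrix.mul_diagonal,
    Matrix.trace, Matrix.diag, Matrix.mul_apply, rhoGHZ, Matrix.add_apply,
    Matrix.smul_apply, Matrix.vecMulVec_apply, Pi.star_apply, ghz, E00,
    Matrix.kroneckerMap_apply, Fintype.sum_prod_type, Fin.sum_univ_two]
  norm_num [Fin.ext_iff, Prod.ext_iff]
  ring_nf
  linear_combination ((((Nghz p x y z : ℝ):ℂ))⁻¹ * ↑p * ((x:ℂ)^2*(y:ℂ)^2*(z:ℂ)^2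
    * (A 0 0 * B 0 0 * C 0 0) + (x:ℂ)*(y:ℂ)*(z:ℂ) * (A 0 1 * B 0 1 * C 0 1
    + A 1 0 * B 1 0 * C 1 0) + A 1 1 * B 1 1 * C 1 1)) * hs2

/-- The correlation polynomial `E(g,h,k) = Re[(g₀+ig₁)(h₀+ih₁)(k₀+ik₁)]`. -/
noncomputable def Efun (g h k : Fin 3 → ℝ) : ℝ :=
  g 0*h 0*k 0 - g 0*h 1*k 1 - g 1*h 1*k 0 - g 1*h 0*k 1

noncomputable def Ffun (g h k : Fin 3 → ℝ) : ℝ := g 2*h 2*k 2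

noncomputable def Pfun (a a' b b' c c' : Fin 3 → ℝ) : ℝ :=
  Efun a b c + Efun a b' c + Efun a b c' - Efun a b' c'
    + Efun a' b c - Efun a' b' c - Efun a' b c' - Efun a' b' c'

noncomputable def Qfun (a a' b b' c c' : Fin 3 → ℝ) : ℝ :=
  Ffun a b c + Ffun a b' c + Ffun a b c' - Ffun a b' c'
    + Ffun a' b c - Ffun a' b' c - Ffun a' b c' - Ffun a' b' c'

lemma svet_trace (p : ℝ) (a a' b b' c c' : Fin 3 → ℝ) :
    (svetlichny a a' b b' c c' * rhoGHZ p).trace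
      = ((p * Pfun a a' b b' c c' : ℝ) : ℂ) := by
  rw [svetlichny, Matrix.kronecker_add, kron_sub]
  rw [Matrix.add_mul, Matrix.add_mul, Matrix.sub_mul, Matrix.trace_add, Matrix.trace_add,
    Matrix.trace_sub]
  rw [trace_kron_rho, trace_kron_rho, trace_kron_rho, trace_kron_rho]
  simp only [obs_apply, Matrix.add_apply, Matrix.sub_apply, Matrix.cons_val', Matrix.cons_val_zero,
    Matrix.cons_val_one, Matrix.head_cons, Matrix.empty_val', Matrix.cons_val_fin_one,
    Matrix.head_fin_const, Pfun, Efun]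
  push_cast
  apply Complex.ext <;>
    simp [Complex.add_re, Complex.add_im, Complex.sub_re, Complex.sub_im, Complex.mul_re,
      Complex.mul_im] <;> ring

lemma svet_traceF (p x y z : ℝ) (a a' b b' c c' : Fin 3 → ℝ) :
    (svetlichny a a' b b' c c' * rhoGHZFiltered p x y z).trace
      = (((Nghz p x y z)⁻¹ * ((x*y*z) * p * Pfun a a' b b' c c'
          + ((1+p)/4*(x^2*y^2*z^2) - (1-p)/4*(x^2*y^2) - (1-p)/4*(x^2*z^2) + (1-p)/4*x^2 - p/2)
            * Qfun a a' b b' c c') : ℝ) : ℂ) := by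
  rw [svetlichny, Matrix.kronecker_add, kron_sub]
  rw [Matrix.add_mul, Matrix.add_mul, Matrix.sub_mul, Matrix.trace_add, Matrix.trace_add,
    Matrix.trace_sub]
  rw [trace_kron_rhoF, trace_kron_rhoF, trace_kron_rhoF, trace_kron_rhoF]
  simp only [obs_apply, Matrix.add_apply, Matrix.sub_apply, Matrix.cons_val', Matrix.cons_val_zero,
    Matrix.cons_val_one, Matrix.head_cons, Matrix.empty_val', Matrix.cons_val_fin_one,
    Matrix.head_fin_const, Pfun, Efun, Qfun, Ffun]
  push_cast
  apply Complex.ext <;>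
    simp [Complex.add_re, Complex.add_im, Complex.sub_re, Complex.sub_im, Complex.mul_re,
      Complex.mul_im] <;> ring

/-- Explicit form of the correlation matrix of the filtered state. -/
noncomputable def Mex (T D : ℝ) : Matrix (Fin 3) (Fin 3 × Fin 3) ℝ :=
  fun j ik => ![![![T,0,0],![0,-T,0],![0,0,0]],
                ![![0,-T,0],![-T,0,0],![0,0,0]],
                ![![0,0,0],![0,0,0],![0,0,D]]] j ik.1 ik.2

lemma MexMul (T D : ℝ) : (Mex T D) * (Mex T D)ᵀ = !![2*T^2,0,0;0,2*T^2,0;0,0,D^2] := by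
  ext i j
  fin_cases i <;> fin_cases j <;>
    simp [Mex, Matrix.mul_apply, Fintype.sum_prod_type, Fin.sum_univ_three,
      Matrix.vecHead, Matrix.vecTail] <;> try ring

lemma charpoly_diag3 (α β : ℝ) :
    (!![α,0,0;0,α,0;0,0,β] : Matrix (Fin 3) (Fin 3) ℝ).charpoly
      = (X - C α)*(X - C α)*(X - C β) := by
  rw [Matrix.charpoly, Matrix.det_fin_three]
  simp [Matrix.charmatrix_apply, Matrix.diagonal]

lemma root_iff (α β t : ℝ) :
    ((X - C α)*(X - C α)*(X - C β) : ℝ[X]).IsRoot t ↔ (t = α ∨ t = β) := by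
  simp [IsRoot, sub_eq_zero]

lemma corr_eq (p : ℝ) (hN : Nghz p (7/10000000) 1000 1000 ≠ 0) :
    corrMat (rhoGHZFiltered p (7/10000000) 1000 1000)
      = Mex ((7/10)*p / Nghz p (7/10000000) 1000 1000)
          (((1+p)/4*(49/100) - (1-p)/4*(49/100000000) - (1-p)/4*(49/100000000)
            + (1-p)/4*(49/100000000000000) - p/2) / Nghz p (7/10000000) 1000 1000) := by
  ext j ik
  obtain ⟨i, k⟩ := ik
  fin_cases j <;> fin_cases i <;> fin_cases k <;>
  · rw [corrMat]
    simp only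
    rw [Matrix.trace_mul_comm, trace_kron_rhoF]
    norm_num [pauli, Mex, Matrix.vecHead, Matrix.vecTail, Complex.ext_iff,
      Complex.add_re, Complex.add_im, Complex.mul_re, Complex.mul_im, Complex.I_re,
      Complex.I_im, div_eq_inv_mul, Complex.inv_re, Complex.inv_im, Complex.normSq_ofReal]
    try ring
    try (field_simp; ring)
    try field_simp
/-- For every `0.3334 < p ≤ 1` there are filters with `√2·p·x·y·z > N(p,x,y,z)`; consequently
the maximal singular value of the correlation matrix of the filtered state is
`√2·p·x·y·z/N > 1` and the Svetlichny bound `4` is exceeded; in particular for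
`0.3334 < p ≤ 1/√2` the state `ρ(p)` itself does not violate the Svetlichny inequality
but its filtered state does (hidden genuine nonlocality). -/
theorem hidden_nonlocality_rhoGHZ (p : ℝ) (hp : 0.3334 < p) (hp1 : p ≤ 1) :
    ∃ x y z : ℝ, 0 < x ∧ 0 < y ∧ 0 < z ∧
      Real.sqrt 2 * p * x * y * z > Nghz p x y z ∧
      IsGreatest
        {s : ℝ | 0 ≤ s ∧
          (corrMat (rhoGHZFiltered p x y z) *
            (corrMat (rhoGHZFiltered p x y z))ᵀ).charpoly.IsRoot (s ^ 2)}
        (Real.sqrt 2 * p * x * y * z / Nghz p x y z) ∧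
      1 < Real.sqrt 2 * p * x * y * z / Nghz p x y z ∧
      (∃ a a' b b' c c' : Fin 3 → ℝ,
        (∑ i : Fin 3, a i ^ 2 = 1) ∧ (∑ i : Fin 3, a' i ^ 2 = 1) ∧
        (∑ i : Fin 3, b i ^ 2 = 1) ∧ (∑ i : Fin 3, b' i ^ 2 = 1) ∧
        (∑ i : Fin 3, c i ^ 2 = 1) ∧ (∑ i : Fin 3, c' i ^ 2 = 1) ∧
        4 < ‖(svetlichny a a' b b' c c' * rhoGHZFiltered p x y z).trace‖) ∧
      (p ≤ 1 / Real.sqrt 2 →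
        ∀ a a' b b' c c' : Fin 3 → ℝ,
          (∑ i : Fin 3, a i ^ 2 = 1) → (∑ i : Fin 3, a' i ^ 2 = 1) →
          (∑ i : Fin 3, b i ^ 2 = 1) → (∑ i : Fin 3, b' i ^ 2 = 1) →
          (∑ i : Fin 3, c i ^ 2 = 1) → (∑ i : Fin 3, c' i ^ 2 = 1) →
          ‖(svetlichny a a' b b' c c' * rhoGHZ p).trace‖ ≤ 4) := by
  have hp0 : 0 < p := lt_trans (by norm_num) hp
  have hsq2 : (1.414213:ℝ) < Real.sqrt 2 := by
    nlinarith [Real.sq_sqrt (show (0:ℝ) ≤ 2 by norm_num), Real.sqrt_nonneg 2]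
  have hs2' : Real.sqrt 2 ^ 2 = 2 := Real.sq_sqrt (by norm_num)
  have hNpos : 0 < Nghz p (7/10000000) 1000 1000 := by
    simp only [Nghz]; nlinarith
  have hNne : Nghz p (7/10000000) 1000 1000 ≠ 0 := ne_of_gt hNpos
  have hmain : Real.sqrt 2 * p * (7/10000000) * 1000 * 1000 > Nghz p (7/10000000) 1000 1000 := by
    have kk : (1.414213:ℝ) * (p * (7/10)) ≤ Real.sqrt 2 * (p * (7/10)) := by
      apply mul_le_mul_of_nonneg_right (le_of_lt hsq2)
      positivity
    simp only [Nghz]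
    nlinarith [kk]
  have h1σ : 1 < Real.sqrt 2 * p * (7/10000000) * 1000 * 1000 / Nghz p (7/10000000) 1000 1000 :=
    (one_lt_div hNpos).mpr hmain
  have hσ0 : 0 ≤ Real.sqrt 2 * p * (7/10000000) * 1000 * 1000 / Nghz p (7/10000000) 1000 1000 :=
    le_of_lt (lt_trans one_pos h1σ)
  have hσ2 : (Real.sqrt 2 * p * (7/10000000) * 1000 * 1000 / Nghz p (7/10000000) 1000 1000)^2
      = 2*((7/10)*p / Nghz p (7/10000000) 1000 1000)^2 := by
    rw [div_pow, div_pow,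
      show (Real.sqrt 2 * p * (7/10000000) * 1000 * 1000)^2
        = (Real.sqrt 2^2) * (p*(7/10000000)*1000*1000)^2 by ring, hs2']
    ring
  refine ⟨7/10000000, 1000, 1000, by norm_num, by norm_num, by norm_num, hmain, ?_, h1σ, ?_, ?_⟩
  · -- IsGreatest
    constructor
    · refine ⟨hσ0, ?_⟩
      rw [corr_eq p hNne, MexMul, charpoly_diag3, root_iff]
      exact Or.inl hσ2
    · rintro s ⟨hs0, hroot⟩
      rw [corr_eq p hNne, MexMul, charpoly_diag3, root_iff] at hroot
      have hD2 : (((1+p)/4*(49/100) - (1-p)/4*(49/100000000) - (1-p)/4*(49/100000000)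
            + (1-p)/4*(49/100000000000000) - p/2) / Nghz p (7/10000000) 1000 1000)^2
          ≤ (Real.sqrt 2 * p * (7/10000000) * 1000 * 1000 / Nghz p (7/10000000) 1000 1000)^2 := by
        rw [hσ2, div_pow, div_pow]
        have hnum : ((1+p)/4*(49/100) - (1-p)/4*(49/100000000) - (1-p)/4*(49/100000000)
            + (1-p)/4*(49/100000000000000) - p/2)^2 ≤ 2*((7/10)*p)^2 := by nlinarith
        have hden : (0:ℝ) < (Nghz p (7/10000000) 1000 1000)^2 := by positivity
        calc ((1+p)/4*(49/100) - (1-p)/4*(49/100000000) - (1-p)/4*(49/100000000)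
            + (1-p)/4*(49/100000000000000) - p/2)^2 / (Nghz p (7/10000000) 1000 1000)^2
            ≤ (2*((7/10)*p)^2) / (Nghz p (7/10000000) 1000 1000)^2 := by gcongr
          _ = 2*(((7/10)*p)^2 / (Nghz p (7/10000000) 1000 1000)^2) := by ring
      rcases hroot with h | h
      · exact le_of_sq_le' _ _ hσ0 (by rw [h, ← hσ2])
      · exact le_of_sq_le' _ _ hσ0 (by rw [h]; exact hD2)
  · -- explicit Svetlichny violation
    refine ⟨![1,0,0], ![0,-1,0], ![Real.sqrt 2/2, Real.sqrt 2/2, 0],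
      ![Real.sqrt 2/2, -(Real.sqrt 2/2), 0], ![1,0,0], ![0,-1,0],
      by simp [Fin.sum_univ_three], by simp [Fin.sum_univ_three], ?_, ?_,
      by simp [Fin.sum_univ_three], by simp [Fin.sum_univ_three], ?_⟩
    · simp [Fin.sum_univ_three, div_pow, hs2']
      norm_num
    · simp [Fin.sum_univ_three, div_pow, hs2']
      norm_num
    · rw [svet_traceF, Complex.norm_real, Real.norm_eq_abs]
      have hPv : Pfun ![1,0,0] ![0,-1,0] ![Real.sqrt 2/2, Real.sqrt 2/2, 0]
          ![Real.sqrt 2/2, -(Real.sqrt 2/2), 0] ![1,0,0] ![0,-1,0] = 4 * Real.sqrt 2 := by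
        simp [Pfun, Efun]
        ring
      have hQv : Qfun ![1,0,0] ![0,-1,0] ![Real.sqrt 2/2, Real.sqrt 2/2, 0]
          ![Real.sqrt 2/2, -(Real.sqrt 2/2), 0] ![1,0,0] ![0,-1,0] = 0 := by
        simp [Qfun, Ffun]
      rw [hPv, hQv]
      rw [show (Nghz p (7/10000000) 1000 1000)⁻¹ *
            (7/10000000 * 1000 * 1000 * p * (4 * Real.sqrt 2) +
              ((1 + p)/4 * ((7/10000000)^2 * 1000^2 * 1000^2) - (1 - p)/4 * ((7/10000000)^2 * 1000^2)
                - (1 - p)/4 * ((7/10000000)^2 * 1000^2) + (1 - p)/4 * (7/10000000)^2 - p/2) * 0)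
          = 4 * (Real.sqrt 2 * p * (7/10000000) * 1000 * 1000 / Nghz p (7/10000000) 1000 1000) by
            ring, abs_of_pos (by linarith)]
      linarith
  · -- Svetlichny bound for the unfiltered state
    intro hple a a' b b' c c' ha ha' hb hb' hc hc'
    simp only [Fin.sum_univ_three] at ha ha' hb hb' hc hc'
    rw [svet_trace, Complex.norm_real, Real.norm_eq_abs]
    have hpr : p * Real.sqrt 2 ≤ 1 := by
      rw [div_eq_mul_inv, one_mul] at hple
      calc p * Real.sqrt 2 ≤ (Real.sqrt 2)⁻¹ * Real.sqrt 2 := by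
            apply mul_le_mul_of_nonneg_right hple (Real.sqrt_nonneg 2)
        _ = 1 := by
            rw [inv_mul_cancel₀ (by positivity : Real.sqrt 2 ≠ 0)]
    have hp2 : p^2 ≤ 1/2 := by nlinarith [hs2']
    have hid : Pfun a a' b b' c c' =
        (((b 0 + b' 0)*(a 0*c 0 - a 1*c 1 - a' 0*c' 0 + a' 1*c' 1)
          - (b 1 + b' 1)*(a 0*c 1 + a 1*c 0 - a' 0*c' 1 - a' 1*c' 0))
        + ((b 0 - b' 0)*(a 0*c' 0 - a 1*c' 1 + a' 0*c 0 - a' 1*c 1)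
          - (b 1 - b' 1)*(a 0*c' 1 + a 1*c' 0 + a' 0*c 1 + a' 1*c 0))) := by
      simp only [Pfun, Efun]
      ring
    have hPb : (Pfun a a' b b' c c')^2 ≤ 32 := by
      rw [hid]
      exact Pbound (a 0) (a 1) (a' 0) (a' 1) (b 0) (b 1) (b' 0) (b' 1) (c 0) (c 1) (c' 0) (c' 1)
        (by nlinarith [sq_nonneg (a 2)]) (by nlinarith [sq_nonneg (a' 2)])
        (by nlinarith [sq_nonneg (b 2)]) (by nlinarith [sq_nonneg (b' 2)])
        (by nlinarith [sq_nonneg (c 2)]) (by nlinarith [sq_nonneg (c' 2)])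
    have hsq : (p * Pfun a a' b b' c c')^2 ≤ 16 := by
      nlinarith [mul_le_mul hp2 hPb (sq_nonneg (Pfun a a' b b' c c')) (by norm_num : (0:ℝ) ≤ 1/2)]
    exact le_of_sq_le' _ _ (by norm_num) (by rw [sq_abs]; nlinarith [hsq])
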